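/- For all real x ∈ [-1/2, 1/2]: |E₄(x + 0.65i)| < 5.9 and |E₄(x + 0.75i)| < 3.45, where E₄ is the normalized weight-4 Eisenstein series. -/

import Mathlib

open Complex Real

/-- The divisor-power sum `σ_k(n) = ∑_{d ∣ n} d^k`. -/
def sigma' (k n : ℕ) : ℕ := ∑ d ∈ n.divisors, d ^ k

/-- The weight-4 Eisenstein series `E₄(τ) = 1 + 240 ∑ σ₃(n) qⁿ`, `q = e^{2πiτ}`. -/
noncomputable def E4 (τ : ℂ) : ℂ :=
  1 + 240 * ∑' n : ℕ, (sigma' 3 (n + 1) : ℂ) * Complex.exp (2 * π * I * τ) ^ (n + 1)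

lemma sigma'_le_pow (n : ℕ) : sigma' 3 n ≤ n ^ 4 := by
  have hsub : n.divisors ⊆ Finset.Icc 1 n := fun d hd => by
    rw [Finset.mem_Icc]
    exact ⟨Nat.pos_of_mem_divisors hd, Nat.divisor_le hd⟩
  calc sigma' 3 n ≤ ∑ _d ∈ n.divisors, n ^ 3 :=
        Finset.sum_le_sum fun d hd => Nat.pow_le_pow_left (Nat.divisor_le hd) 3
    _ = n.divisors.card * n ^ 3 := by rw [Finset.sum_const, smul_eq_mul]
    _ ≤ n * n ^ 3 := by
        refine Nat.mul_le_mul_right _ ?_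
        calc n.divisors.card ≤ (Finset.Icc 1 n).card := Finset.card_le_card hsub
          _ = n := by simp
    _ = n ^ 4 := by ring

lemma succ_pow4_le (n : ℕ) : (n + 1) ^ 4 ≤ 16 ^ n := by
  induction n with
  | zero => norm_num
  | succ k ih =>
    calc (k + 2) ^ 4 ≤ (2 * (k + 1)) ^ 4 := Nat.pow_le_pow_left (by omega) 4
      _ = 16 * (k + 1) ^ 4 := by ring
      _ ≤ 16 * 16 ^ k := Nat.mul_le_mul_left _ ih
      _ = 16 ^ (k + 1) := by ring

lemma shift_pow4_le (k : ℕ) : ((k : ℝ) + 3) ^ 4 ≤ 81 * (256 / 81) ^ k := by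
  induction k with
  | zero => norm_num
  | succ m ih =>
    push_cast
    have h3 : (3 * ((m : ℝ) + 4)) ^ 4 ≤ (4 * ((m : ℝ) + 3)) ^ 4 := by
      have : (3 * ((m : ℝ) + 4)) ≤ 4 * ((m : ℝ) + 3) := by
        have : (0 : ℝ) ≤ m := Nat.cast_nonneg m
        linarith
      exact pow_le_pow_left₀ (by positivity) this 4
    have : ((m : ℝ) + 1 + 3) ^ 4 ≤ (256 / 81) * ((m : ℝ) + 3) ^ 4 := by nlinarith
    calc ((m : ℝ) + 1 + 3) ^ 4 ≤ (256 / 81) * ((m : ℝ) + 3) ^ 4 := this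
      _ ≤ (256 / 81) * (81 * (256 / 81) ^ m) := by
          have : (0 : ℝ) < 256 / 81 := by norm_num
          nlinarith
      _ = 81 * (256 / 81) ^ (m + 1) := by ring

lemma E4_norm_le (τ : ℂ) (ρ : ℝ) (hρ0 : 0 < ρ) (hρ : ρ ≤ 1 / 50)
    (h : ‖Complex.exp (2 * π * I * τ)‖ ≤ ρ) :
    ‖E4 τ‖ ≤ 1 + 240 * (ρ + 9 * ρ ^ 2 + 81 * ρ ^ 3 * (1 - 256 / 81 * ρ)⁻¹) := by
  set q := Complex.exp (2 * π * I * τ) with hq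
  set g : ℕ → ℝ := fun n => (sigma' 3 (n + 1) : ℝ) * ρ ^ (n + 1) with hg
  have hq0 : (0 : ℝ) ≤ ‖q‖ := norm_nonneg _
  have hbound : ∀ n : ℕ, ‖(sigma' 3 (n + 1) : ℂ) * q ^ (n + 1)‖ ≤ g n := by
    intro n
    rw [norm_mul, norm_pow, Complex.norm_natCast]
    exact mul_le_mul_of_nonneg_left
      (pow_le_pow_left₀ hq0 h _) (Nat.cast_nonneg _)
  have hgle : ∀ n : ℕ, g n ≤ ρ * (16 * ρ) ^ n := by
    intro n
    have h1 : (sigma' 3 (n + 1) : ℝ) ≤ 16 ^ n := by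
      have := (sigma'_le_pow (n + 1)).trans (succ_pow4_le n)
      exact_mod_cast Nat.cast_le.2 this
    calc g n = (sigma' 3 (n + 1) : ℝ) * ρ ^ (n + 1) := rfl
      _ ≤ (16 : ℝ) ^ n * ρ ^ (n + 1) := by
          exact mul_le_mul_of_nonneg_right h1 (by positivity)
      _ = ρ * (16 * ρ) ^ n := by rw [mul_pow, pow_succ]; ring
  have hsum16 : Summable (fun n : ℕ => ρ * (16 * ρ) ^ n) :=
    (summable_geometric_of_lt_one (by positivity) (by linarith)).mul_left ρ
  have hgnn : ∀ n, 0 ≤ g n := fun n => by positivity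
  have hgsum : Summable g := Summable.of_nonneg_of_le hgnn hgle hsum16
  have hnorm : ‖∑' n : ℕ, (sigma' 3 (n + 1) : ℂ) * q ^ (n + 1)‖ ≤ ∑' n, g n :=
    tsum_of_norm_bounded hgsum.hasSum hbound
  have htail : ∑' k : ℕ, g (k + 2) ≤ 81 * ρ ^ 3 * (1 - 256 / 81 * ρ)⁻¹ := by
    have hr : (0 : ℝ) ≤ 256 / 81 * ρ := by positivity
    have hr1 : 256 / 81 * ρ < 1 := by nlinarith
    have hs : Summable (fun k : ℕ => 81 * ρ ^ 3 * (256 / 81 * ρ) ^ k) :=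
      (summable_geometric_of_lt_one hr hr1).mul_left _
    have hle : ∀ k : ℕ, g (k + 2) ≤ 81 * ρ ^ 3 * (256 / 81 * ρ) ^ k := by
      intro k
      have h1 : (sigma' 3 (k + 3) : ℝ) ≤ ((k : ℝ) + 3) ^ 4 := by
        have := sigma'_le_pow (k + 3)
        calc (sigma' 3 (k + 3) : ℝ) ≤ ((k + 3 : ℕ) : ℝ) ^ 4 := by exact_mod_cast this
          _ = ((k : ℝ) + 3) ^ 4 := by push_cast; ring
      have h2 := shift_pow4_le k
      calc g (k + 2) = (sigma' 3 (k + 3) : ℝ) * ρ ^ (k + 3) := by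
            simp only [hg]
        _ ≤ 81 * (256 / 81) ^ k * ρ ^ (k + 3) :=
            mul_le_mul_of_nonneg_right (h1.trans h2) (by positivity)
        _ = 81 * ρ ^ 3 * (256 / 81 * ρ) ^ k := by rw [mul_pow]; ring
    calc ∑' k : ℕ, g (k + 2) ≤ ∑' k : ℕ, 81 * ρ ^ 3 * (256 / 81 * ρ) ^ k :=
          Summable.tsum_le_tsum hle (hgsum.comp_injective fun a b => by omega) hs
      _ = 81 * ρ ^ 3 * (1 - 256 / 81 * ρ)⁻¹ := by
          rw [tsum_mul_left, tsum_geometric_of_lt_one hr hr1]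
  have hsplit : ∑' n, g n = g 0 + g 1 + ∑' k : ℕ, g (k + 2) := by
    rw [← Summable.sum_add_tsum_nat_add 2 hgsum, Finset.sum_range_succ, Finset.sum_range_one]
  have hg0 : g 0 = ρ := by
    have : sigma' 3 1 = 1 := by decide
    simp [hg, this]
  have hg1 : g 1 = 9 * ρ ^ 2 := by
    have : sigma' 3 2 = 9 := by decide
    simp [hg, this]
  have htsum : ∑' n, g n ≤ ρ + 9 * ρ ^ 2 + 81 * ρ ^ 3 * (1 - 256 / 81 * ρ)⁻¹ := by
    rw [hsplit, hg0, hg1]; linarith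
  calc ‖E4 τ‖ ≤ ‖(1 : ℂ)‖ + ‖(240 : ℂ) * ∑' n : ℕ, (sigma' 3 (n + 1) : ℂ) * q ^ (n + 1)‖ :=
        norm_add_le _ _
    _ = 1 + 240 * ‖∑' n : ℕ, (sigma' 3 (n + 1) : ℂ) * q ^ (n + 1)‖ := by
        rw [norm_mul]; norm_num
    _ ≤ 1 + 240 * (ρ + 9 * ρ ^ 2 + 81 * ρ ^ 3 * (1 - 256 / 81 * ρ)⁻¹) := by
        have := hnorm.trans htsum
        linarith

lemma exp_four_gt : (54.5981 : ℝ) < Real.exp 4 := by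
  have h := Real.exp_one_gt_d9
  have h4 : Real.exp 4 = Real.exp 1 ^ 4 := by
    rw [← Real.exp_nat_mul]; norm_num
  rw [h4]
  have h2 : (2.7182818283 : ℝ) ^ 4 ≤ Real.exp 1 ^ 4 :=
    pow_le_pow_left₀ (by norm_num) h.le 4
  nlinarith

lemma qnorm (x y : ℝ) :
    ‖Complex.exp (2 * π * I * ((x : ℂ) + (y : ℝ) * I))‖ = Real.exp (-(2 * π * y)) := by
  rw [Complex.norm_exp]
  congr 1
  simp [Complex.add_re, Complex.mul_re, Complex.mul_im]

lemma exp_le_65 : Real.exp (-(2 * π * 0.65)) ≤ 169 / 10000 := by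
  have hπ : (3.141592 : ℝ) < π := Real.pi_gt_d6
  have h1 : (4.0840696 : ℝ) ≤ 2 * π * 0.65 := by nlinarith
  have h2 : Real.exp (-(2 * π * 0.65)) ≤ Real.exp (-(4.0840696 : ℝ)) := by
    apply Real.exp_le_exp.2; linarith
  refine h2.trans ?_
  rw [Real.exp_neg]
  rw [inv_le_comm₀ (Real.exp_pos _) (by norm_num)]
  have : Real.exp (4.0840696 : ℝ) = Real.exp 4 * Real.exp 0.0840696 := by
    rw [← Real.exp_add]; norm_num
  rw [this]
  have hA : (54.5981 : ℝ) < Real.exp 4 := exp_four_gt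
  have hB : (1.0840696 : ℝ) ≤ Real.exp 0.0840696 := by
    have := Real.add_one_le_exp (0.0840696 : ℝ); linarith
  have key : (54.5981 : ℝ) * 1.0840696 ≤ Real.exp 4 * Real.exp 0.0840696 :=
    mul_le_mul hA.le hB (by norm_num) (Real.exp_pos 4).le
  nlinarith

lemma exp_le_75 : Real.exp (-(2 * π * 0.75)) ≤ 926 / 100000 := by
  have hπ : (3.141592 : ℝ) < π := Real.pi_gt_d6
  have h1 : (4.712388 : ℝ) ≤ 2 * π * 0.75 := by nlinarith
  have h2 : Real.exp (-(2 * π * 0.75)) ≤ Real.exp (-(4.712388 : ℝ)) := by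
    apply Real.exp_le_exp.2; linarith
  refine h2.trans ?_
  rw [Real.exp_neg]
  rw [inv_le_comm₀ (Real.exp_pos _) (by norm_num)]
  have hsplit : Real.exp (4.712388 : ℝ) = Real.exp 4 * Real.exp 0.712388 := by
    rw [← Real.exp_add]; norm_num
  rw [hsplit]
  have hA : (54.5981 : ℝ) < Real.exp 4 := exp_four_gt
  have hB : ((1.0890485 : ℝ)) ^ 8 ≤ Real.exp 0.712388 := by
    have h8 : Real.exp (0.712388 : ℝ) = Real.exp 0.0890485 ^ 8 := by
      rw [← Real.exp_nat_mul]; norm_num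
    rw [h8]
    have := Real.add_one_le_exp (0.0890485 : ℝ)
    exact pow_le_pow_left₀ (by norm_num) (by linarith) 8
  have hBnum : (1.97869 : ℝ) ≤ ((1.0890485 : ℝ)) ^ 8 := by norm_num
  have key : (54.5981 : ℝ) * 1.97869 ≤ Real.exp 4 * Real.exp 0.712388 :=
    mul_le_mul hA.le (hBnum.trans hB) (by norm_num) (Real.exp_pos 4).le
  nlinarith

theorem E4_line_bounds (x : ℝ) (hx : x ∈ Set.Icc (-(1/2) : ℝ) (1/2)) :
    ‖E4 ((x : ℂ) + 0.65 * I)‖ < 5.9 ∧ ‖E4 ((x : ℂ) + 0.75 * I)‖ < 3.45 := by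
  constructor
  · have hq : ‖Complex.exp (2 * π * I * ((x : ℂ) + 0.65 * I))‖ ≤ 169 / 10000 := by
      have := qnorm x 0.65
      have h065 : ((0.65 : ℝ) : ℂ) = (0.65 : ℂ) := by norm_num
      rw [h065] at this
      rw [this]
      exact exp_le_65
    have := E4_norm_le ((x : ℂ) + 0.65 * I) (169 / 10000) (by norm_num) (by norm_num) hq
    refine this.trans_lt ?_
    norm_num
  · have hq : ‖Complex.exp (2 * π * I * ((x : ℂ) + 0.75 * I))‖ ≤ 926 / 100000 := by
      have := qnorm x 0.75
      have h075 : ((0.75 : ℝ) : ℂ) = (0.75 : ℂ) := by norm_num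
      rw [h075] at this
      rw [this]
      exact exp_le_75
    have := E4_norm_le ((x : ℂ) + 0.75 * I) (926 / 100000) (by norm_num) (by norm_num) hq
    refine this.trans_lt ?_
    norm_num
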